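/- For each k ∈ ℕ and 1 ≤ m ≤ k, letting λ = (4k-8m+1)/(4k+1), f₁(t) = 1, and f₂(t) = ((4k+1)π/2)·cos((4k+1)πt/2), there do not exist 0 ≤ x₁ ≤ x₂ ≤ 1 such that ∫₀¹ (Σ₂(x₁,x₂)(t) - λ) fᵢ(t) dt = 0 for both i = 1, 2. -/

import Mathlib

open MeasureTheory Real

lemma ae_ne_pt (a : ℝ) : ∀ᵐ t : ℝ, t ≠ a := by
  rw [ae_iff]
  simp only [not_not, Set.setOf_eq_eq_singleton]
  exact measure_singleton a

lemma key (x₁ x₂ : ℝ) (h0 : 0 ≤ x₁) (h12 : x₁ ≤ x₂) (h21 : x₂ ≤ 1)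
    (f : ℝ → ℝ) (hf : Continuous f) :
    ∫ t in (0:ℝ)..1, (if x₁ ≤ t ∧ t < x₂ then (-1:ℝ) else 1) * f t
      = (∫ t in (0:ℝ)..1, f t) - 2 * ∫ t in x₁..x₂, f t := by
  set σ : ℝ → ℝ := fun t => if x₁ ≤ t ∧ t < x₂ then (-1:ℝ) else 1 with hσ
  have hσm : Measurable σ := by
    have : σ = (Set.Ico x₁ x₂).piecewise (fun _ => (-1:ℝ)) (fun _ => 1) := by
      funext t; simp [σ, Set.piecewise, Set.mem_Ico]
    rw [this]
    exact Measurable.piecewise measurableSet_Ico measurable_const measurable_const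
  have hI : IntervalIntegrable (fun t => σ t * f t) volume 0 1 := by
    refine (hf.intervalIntegrable 0 1).mono_fun
      ((hσm.mul hf.measurable).aestronglyMeasurable) ?_
    refine Filter.Eventually.of_forall fun t => ?_
    simp only [norm_mul, σ]
    split_ifs <;> simp
  have hsub : ∀ u v : ℝ, 0 ≤ u → v ≤ 1 → u ≤ v →
      Set.uIcc u v ⊆ Set.uIcc (0:ℝ) 1 := by
    intro u v hu hv huv
    rw [Set.uIcc_of_le huv, Set.uIcc_of_le zero_le_one]
    exact Set.Icc_subset_Icc hu hv
  have h1 : x₁ ≤ 1 := le_trans h12 h21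
  have h02 : 0 ≤ x₂ := le_trans h0 h12
  have hI1 := hI.mono_set (hsub 0 x₁ le_rfl h1 h0)
  have hI2 := hI.mono_set (hsub x₁ x₂ h0 h21 h12)
  have hI3 := hI.mono_set (hsub x₂ 1 h02 le_rfl h21)
  have e1 : ∫ t in (0:ℝ)..x₁, σ t * f t = ∫ t in (0:ℝ)..x₁, f t := by
    refine intervalIntegral.integral_congr_ae ?_
    filter_upwards [ae_ne_pt x₁] with t ht hmem
    rw [Set.uIoc_of_le h0] at hmem
    have : ¬ (x₁ ≤ t ∧ t < x₂) := fun h => ht (le_antisymm hmem.2 h.1)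
    simp [σ, this]
  have e2 : ∫ t in x₁..x₂, σ t * f t = - ∫ t in x₁..x₂, f t := by
    rw [← intervalIntegral.integral_neg]
    refine intervalIntegral.integral_congr_ae ?_
    filter_upwards [ae_ne_pt x₂] with t ht hmem
    rw [Set.uIoc_of_le h12] at hmem
    have : x₁ ≤ t ∧ t < x₂ := ⟨le_of_lt hmem.1, lt_of_le_of_ne hmem.2 ht⟩
    simp [σ, this]
  have e3 : ∫ t in x₂..1, σ t * f t = ∫ t in x₂..1, f t := by
    refine intervalIntegral.integral_congr_ae ?_
    refine Filter.Eventually.of_forall fun t hmem => ?_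
    rw [Set.uIoc_of_le h21] at hmem
    have : ¬ (x₁ ≤ t ∧ t < x₂) := fun h => absurd h.2 (not_lt.2 (le_of_lt hmem.1))
    simp [σ, this]
  have hsplit : ∫ t in (0:ℝ)..1, σ t * f t
      = (∫ t in (0:ℝ)..x₁, σ t * f t) + (∫ t in x₁..x₂, σ t * f t)
        + ∫ t in x₂..1, σ t * f t := by
    rw [intervalIntegral.integral_add_adjacent_intervals hI1 hI2,
      intervalIntegral.integral_add_adjacent_intervals (hI1.trans hI2) hI3]
  have hfsplit : ∫ t in (0:ℝ)..1, f t
      = (∫ t in (0:ℝ)..x₁, f t) + (∫ t in x₁..x₂, f t) + ∫ t in x₂..1, f t := by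
    rw [intervalIntegral.integral_add_adjacent_intervals (hf.intervalIntegrable _ _)
        (hf.intervalIntegrable _ _),
      intervalIntegral.integral_add_adjacent_intervals (hf.intervalIntegrable _ _)
        (hf.intervalIntegrable _ _)]
  rw [hsplit, e1, e2, e3]
  rw [hfsplit]; ring

theorem stmt_3 (k m : ℕ) (hm : 1 ≤ m) (hmk : m ≤ k) :
    ¬ ∃ x₁ x₂ : ℝ, 0 ≤ x₁ ∧ x₁ ≤ x₂ ∧ x₂ ≤ 1 ∧
      (∫ t in (0:ℝ)..1,
        ((if x₁ ≤ t ∧ t < x₂ then (-1:ℝ) else 1) - (4*(k:ℝ) - 8*m + 1)/(4*k + 1))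
          * (1:ℝ)) = 0 ∧
      (∫ t in (0:ℝ)..1,
        ((if x₁ ≤ t ∧ t < x₂ then (-1:ℝ) else 1) - (4*(k:ℝ) - 8*m + 1)/(4*k + 1))
          * ((4*(k:ℝ) + 1) * π / 2 * Real.cos ((4*(k:ℝ) + 1) * π * t / 2))) = 0 := by
  rintro ⟨x₁, x₂, h0, h12, h21, H1, H2⟩
  set c : ℝ := 4*(k:ℝ) + 1 with hc
  have hcpos : 0 < c := by positivity
  set L : ℝ := (4*(k:ℝ) - 8*m + 1)/c with hL
  set f : ℝ → ℝ := fun t => c * π / 2 * Real.cos (c * π * t / 2) with hf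
  have hfc : Continuous f := by
    apply continuous_const.mul
    exact Real.continuous_cos.comp (by continuity)
  -- antiderivative computation
  have F : ∀ u v : ℝ, ∫ t in u..v, f t
      = Real.sin (c * π * v / 2) - Real.sin (c * π * u / 2) := by
    intro u v
    refine intervalIntegral.integral_eq_sub_of_hasDerivAt
      (f := fun t => Real.sin (c * π * t / 2)) (fun t _ => ?_)
      (hfc.intervalIntegrable u v)
    have h1 : HasDerivAt (fun t : ℝ => c * π * t / 2) (c * π / 2) t := by
      simpa using ((hasDerivAt_id t).const_mul (c * π)).div_const 2
    have h2 := (Real.hasDerivAt_sin (c * π * t / 2)).comp t h1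
    simpa [hf, mul_comm, Function.comp_def] using h2
  have hsin1 : Real.sin (c * π * 1 / 2) = 1 := by
    have : c * π * 1 / 2 = π / 2 + (k : ℝ) * (2 * π) := by rw [hc]; ring
    rw [this]
    rw [show ((k:ℝ) * (2*π)) = ((k:ℕ):ℝ) * (2*π) by norm_num]
    rw [Real.sin_add_nat_mul_two_pi, Real.sin_pi_div_two]
  -- integrability of the sign function times continuous f
  have hσm : Measurable (fun t => if x₁ ≤ t ∧ t < x₂ then (-1:ℝ) else 1) := by
    have : (fun t => if x₁ ≤ t ∧ t < x₂ then (-1:ℝ) else 1)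
        = (Set.Ico x₁ x₂).piecewise (fun _ => (-1:ℝ)) (fun _ => 1) := by
      funext t; simp [Set.piecewise, Set.mem_Ico]
    rw [this]
    exact Measurable.piecewise measurableSet_Ico measurable_const measurable_const
  have hIg : ∀ g : ℝ → ℝ, Continuous g →
      IntervalIntegrable (fun t => (if x₁ ≤ t ∧ t < x₂ then (-1:ℝ) else 1) * g t)
        volume 0 1 := by
    intro g hg
    refine (hg.intervalIntegrable 0 1).mono_fun
      ((hσm.mul hg.measurable).aestronglyMeasurable) ?_
    refine Filter.Eventually.of_forall fun t => ?_
    simp only [norm_mul]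
    split_ifs <;> simp
  -- process H1
  have H1' : (1 : ℝ) - 2 * (x₂ - x₁) - L = 0 := by
    have expand : ∀ t : ℝ, ((if x₁ ≤ t ∧ t < x₂ then (-1:ℝ) else 1) - L) * (1:ℝ)
        = (if x₁ ≤ t ∧ t < x₂ then (-1:ℝ) else 1) * (1:ℝ) - L * 1 := fun t => by ring
    rw [intervalIntegral.integral_congr (fun t _ => expand t)] at H1
    rw [intervalIntegral.integral_sub (hIg _ continuous_const)
      (intervalIntegrable_const)] at H1
    rw [key x₁ x₂ h0 h12 h21 _ continuous_const] at H1
    simp only [intervalIntegral.integral_const, smul_eq_mul] at H1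
    linarith [H1]
  have H2' : (1 : ℝ) - 2 * (Real.sin (c * π * x₂ / 2) - Real.sin (c * π * x₁ / 2))
      - L = 0 := by
    have expand : ∀ t : ℝ, ((if x₁ ≤ t ∧ t < x₂ then (-1:ℝ) else 1) - L) * f t
        = (if x₁ ≤ t ∧ t < x₂ then (-1:ℝ) else 1) * f t - L * f t := fun t => by ring
    rw [intervalIntegral.integral_congr (fun t _ => expand t)] at H2
    rw [intervalIntegral.integral_sub (hIg f hfc)
      ((hfc.intervalIntegrable 0 1).const_mul L)] at H2
    rw [key x₁ x₂ h0 h12 h21 f hfc] at H2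
    rw [F, F, intervalIntegral.integral_const_mul, F] at H2
    have h00 : Real.sin (c * π * 0 / 2) = 0 := by norm_num
    rw [hsin1, h00] at H2
    linear_combination H2
  -- derive x₂ - x₁ = 4m/c
  have h1L : 1 - L = 8 * (m:ℝ) / c := by
    rw [hL, hc]; field_simp; ring
  have hx : x₂ = x₁ + 4 * (m:ℝ) / c := by
    have h8 : (8:ℝ) * (m:ℝ) / c = 2 * (4 * (m:ℝ) / c) := by ring
    linarith
  have harg : c * π * x₂ / 2 = c * π * x₁ / 2 + (m:ℕ) * (2 * π) := by
    rw [hx]; field_simp; ring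
  rw [harg, Real.sin_add_nat_mul_two_pi] at H2'
  have hmpos : (0:ℝ) < (m:ℝ) := by exact_mod_cast hm
  have : (0:ℝ) < 8 * (m:ℝ) / c := by positivity
  simp only [sub_self, mul_zero] at H2'
  linarith
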